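/- arXiv:math/9506203 — 2 statements merged into one kernel-verified Lean document; each statement's English description precedes it below -/
import Mathlib

section
/- Every first integral H of the vector field v(x,y) = (y, x^2) that is a formal power series satisfies dH(0) = 0; i.e., v has no non-singular formal integral. -/
open MvPowerSeries

/-- Formal partial derivative of a formal power series in two variables,
with respect to the i-th variable. -/
noncomputable def formalPDeriv (i : Fin 2) (H : MvPowerSeries (Fin 2) ℝ) :
    MvPowerSeries (Fin 2) ℝ :=
  fun d => ((d i : ℝ) + 1) * coeff (d + Finsupp.single i 1) H

lemma coeff_formalPDeriv (i : Fin 2) (H : MvPowerSeries (Fin 2) ℝ) (d : Fin 2 →₀ ℕ) :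
    coeff d (formalPDeriv i H) = ((d i : ℝ) + 1) * coeff (d + Finsupp.single i 1) H := rfl

/-- Every formal integral H of v(x,y) = (y, x²), i.e. every H with
y·H_x + x²·H_y = 0, has vanishing linear part: dH(0) = 0.  Hence v has no
non-singular formal integral.  (Variable 0 is x, variable 1 is y.) -/
theorem no_nonsingular_formal_integral (H : MvPowerSeries (Fin 2) ℝ)
    (hint : X 1 * formalPDeriv 0 H + (X 0) ^ 2 * formalPDeriv 1 H = 0) :
    coeff (Finsupp.single 0 1) H = 0 ∧ coeff (Finsupp.single 1 1) H = 0 := by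
  have key : ∀ d : Fin 2 →₀ ℕ,
      coeff d (X 1 * formalPDeriv 0 H + (X 0) ^ 2 * formalPDeriv 1 H) = 0 := by
    intro d; rw [hint, map_zero]
  constructor
  · have h := key (Finsupp.single 1 1)
    rw [map_add, X_def, X_pow_eq, coeff_monomial_mul, coeff_monomial_mul,
      if_pos le_rfl, if_neg, tsub_self, coeff_formalPDeriv, add_zero] at h
    · simpa using h
    · intro hle
      have := hle 0
      simp [Finsupp.single_apply] at this
  · have h := key (Finsupp.single 0 2)
    rw [map_add, X_def, X_pow_eq, coeff_monomial_mul, coeff_monomial_mul,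
      if_pos le_rfl, if_neg, tsub_self, coeff_formalPDeriv, zero_add] at h
    · simpa using h
    · intro hle
      have := hle 1
      simp [Finsupp.single_apply] at this
end

section
/- If formal power series μ(t), ν(t), a(t), b(t) with nonnegative coefficients satisfy μ ≺ ν + 2aμ + b and ν ≺ b/(1-a), with a(0) = 0, then μ ≺ 2b/(1-2a)^2. -/
open PowerSeries Finset

private lemma maj_inv_eq (A : PowerSeries ℝ) (hA0 : PowerSeries.constantCoeff A = 0) :
    (1 - A)⁻¹ = 1 + A * (1 - A)⁻¹ := by
  have h : PowerSeries.constantCoeff (1 - A) ≠ 0 := by simp [hA0]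
  have hc := PowerSeries.mul_inv_cancel (1 - A) h
  linear_combination hc

private lemma maj_conv_le (A p q : PowerSeries ℝ) (n : ℕ)
    (hA : ∀ k, 0 ≤ coeff k A) (hA0 : PowerSeries.constantCoeff A = 0)
    (hp : ∀ j, j < n → coeff j p ≤ coeff j q) :
    coeff n (A * p) ≤ coeff n (A * q) := by
  rw [PowerSeries.coeff_mul, PowerSeries.coeff_mul]
  apply Finset.sum_le_sum
  intro ij hij
  rcases Nat.eq_zero_or_pos ij.1 with h | h
  · have hz : coeff ij.1 A = 0 := by
      rw [h]; simpa [PowerSeries.coeff_zero_eq_constantCoeff] using hA0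
    simp [hz]
  · have hj : ij.2 < n := by
      have := Finset.HasAntidiagonal.mem_antidiagonal.mp hij
      omega
    exact mul_le_mul_of_nonneg_left (hp _ hj) (hA _)

private lemma maj_X_nonneg (A : PowerSeries ℝ) (hA : ∀ k, 0 ≤ coeff k A)
    (hA0 : PowerSeries.constantCoeff A = 0) : ∀ n, 0 ≤ coeff n (1 - A)⁻¹ := by
  have hx := maj_inv_eq A hA0
  intro n
  induction n using Nat.strong_induction_on with
  | _ n ih =>
    rw [hx, map_add]
    have h1 : (0:ℝ) ≤ coeff n (1 : PowerSeries ℝ) := by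
      rw [PowerSeries.coeff_one]; positivity
    have h2 : (0:ℝ) ≤ coeff n (A * (1 - A)⁻¹) := by
      rw [PowerSeries.coeff_mul]
      apply Finset.sum_nonneg
      intro ij hij
      rcases Nat.eq_zero_or_pos ij.1 with h | h
      · have hz : coeff ij.1 A = 0 := by
          rw [h]; simpa [PowerSeries.coeff_zero_eq_constantCoeff] using hA0
        simp [hz]
      · have hj : ij.2 < n := by
          have := Finset.HasAntidiagonal.mem_antidiagonal.mp hij; omega
        exact mul_nonneg (hA _) (ih _ hj)
    linarith

private lemma maj_X_mono (A C : PowerSeries ℝ)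
    (hC : ∀ k, 0 ≤ coeff k C)
    (hA0 : PowerSeries.constantCoeff A = 0) (hC0 : PowerSeries.constantCoeff C = 0)
    (hAC : ∀ k, coeff k A ≤ coeff k C)
    (hXnn : ∀ k, 0 ≤ coeff k (1 - A)⁻¹) :
    ∀ n, coeff n (1 - A)⁻¹ ≤ coeff n (1 - C)⁻¹ := by
  have hx := maj_inv_eq A hA0
  have hy := maj_inv_eq C hC0
  intro n
  induction n using Nat.strong_induction_on with
  | _ n ih =>
    rw [hx, hy, map_add, map_add]
    have h2 : coeff n (A * (1 - A)⁻¹) ≤ coeff n (C * (1 - C)⁻¹) := by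
      rw [PowerSeries.coeff_mul, PowerSeries.coeff_mul]
      apply Finset.sum_le_sum
      intro ij hij
      rcases Nat.eq_zero_or_pos ij.1 with h | h
      · have hzA : coeff ij.1 A = 0 := by
          rw [h]; simpa [PowerSeries.coeff_zero_eq_constantCoeff] using hA0
        have hzC : coeff ij.1 C = 0 := by
          rw [h]; simpa [PowerSeries.coeff_zero_eq_constantCoeff] using hC0
        simp [hzA, hzC]
      · have hj : ij.2 < n := by
          have := Finset.HasAntidiagonal.mem_antidiagonal.mp hij; omega
        calc coeff ij.1 A * coeff ij.2 (1 - A)⁻¹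
            ≤ coeff ij.1 C * coeff ij.2 (1 - A)⁻¹ :=
              mul_le_mul_of_nonneg_right (hAC _) (hXnn _)
          _ ≤ coeff ij.1 C * coeff ij.2 (1 - C)⁻¹ :=
              mul_le_mul_of_nonneg_left (ih _ hj) (hC _)
    linarith

private lemma maj_mul_nonneg (p q : PowerSeries ℝ) (hp : ∀ k, 0 ≤ coeff k p)
    (hq : ∀ k, 0 ≤ coeff k q) : ∀ n, 0 ≤ coeff n (p * q) := by
  intro n
  rw [PowerSeries.coeff_mul]
  exact Finset.sum_nonneg fun ij _ => mul_nonneg (hp _) (hq _)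

private lemma maj_mul_mono (r p q : PowerSeries ℝ) (hr : ∀ k, 0 ≤ coeff k r)
    (hpq : ∀ k, coeff k p ≤ coeff k q) : ∀ n, coeff n (r * p) ≤ coeff n (r * q) := by
  intro n
  rw [PowerSeries.coeff_mul, PowerSeries.coeff_mul]
  exact Finset.sum_le_sum fun ij _ =>
    mul_le_mul_of_nonneg_left (hpq _) (hr _)

/-- If μ ≺ ν + 2aμ + b and ν ≺ b/(1-a), with nonnegative coefficients and a(0)=0,
then μ ≺ 2b/(1-2a)^2. -/
theorem majorant_u_estimate (μ ν a b : PowerSeries ℝ)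
    (hμ : ∀ n, 0 ≤ coeff n μ) (hν : ∀ n, 0 ≤ coeff n ν)
    (ha : ∀ n, 0 ≤ coeff n a) (hb : ∀ n, 0 ≤ coeff n b)
    (ha0 : PowerSeries.constantCoeff a = 0)
    (hdomμ : ∀ n, coeff n μ ≤ coeff n (ν + 2 * a * μ + b))
    (hdomν : ∀ n, coeff n ν ≤ coeff n (b * (1 - a)⁻¹)) :
    ∀ n, coeff n μ ≤ coeff n (2 * b * ((1 - 2 * a)⁻¹) ^ 2) := by
  set A : PowerSeries ℝ := 2 * a with hAdef
  have hA : ∀ k, 0 ≤ coeff k A := by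
    intro k
    have : coeff k A = coeff k a + coeff k a := by
      rw [hAdef, two_mul, map_add]
    rw [this]; linarith [ha k]
  have hA0 : PowerSeries.constantCoeff A = 0 := by
    rw [hAdef, map_mul, ha0, mul_zero]
  have haA : ∀ k, coeff k a ≤ coeff k A := by
    intro k
    have : coeff k A = coeff k a + coeff k a := by
      rw [hAdef, two_mul, map_add]
    rw [this]; linarith [ha k]
  set Z : PowerSeries ℝ := (1 - A)⁻¹ with hZdef
  set M : PowerSeries ℝ := 2 * b * Z ^ 2 with hMdef
  have hZnn : ∀ k, 0 ≤ coeff k Z := maj_X_nonneg A hA hA0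
  have hWnn : ∀ k, 0 ≤ coeff k (1 - a)⁻¹ := maj_X_nonneg a ha ha0
  have hWZ : ∀ k, coeff k (1 - a)⁻¹ ≤ coeff k Z :=
    maj_X_mono a A hA ha0 hA0 haA hWnn
  -- M = 2bZ + A * M
  have hZeq : Z = 1 + A * Z := maj_inv_eq A hA0
  have hMeq : M = 2 * b * Z + A * M := by
    rw [hMdef]
    calc 2 * b * Z ^ 2 = 2 * b * (Z * Z) := by ring
      _ = 2 * b * ((1 + A * Z) * Z) := by rw [← hZeq]
      _ = 2 * b * Z + A * (2 * b * Z ^ 2) := by ring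
  -- b * (1-a)⁻¹ + b ≤ 2 b Z coefficientwise
  have hkey : ∀ k, coeff k (b * (1 - a)⁻¹) + coeff k b ≤ coeff k (2 * b * Z) := by
    intro k
    have h1 : coeff k b ≤ coeff k (b * (1 - a)⁻¹) := by
      have he : b * (1 - a)⁻¹ = b + b * (a * (1 - a)⁻¹) := by
        have := maj_inv_eq a ha0
        calc b * (1 - a)⁻¹ = b * (1 + a * (1 - a)⁻¹) := by rw [← this]
          _ = b + b * (a * (1 - a)⁻¹) := by ring
      have hnn : 0 ≤ coeff k (b * (a * (1 - a)⁻¹)) :=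
        maj_mul_nonneg b _ hb (maj_mul_nonneg a _ ha hWnn) k
      rw [he, map_add]; linarith
    have h2 : coeff k (b * (1 - a)⁻¹) ≤ coeff k (b * Z) :=
      maj_mul_mono b _ _ hb hWZ k
    have h3 : coeff k (2 * b * Z) = coeff k (b * Z) + coeff k (b * Z) := by
      have : (2 : PowerSeries ℝ) * b * Z = b * Z + b * Z := by ring
      rw [this, map_add]
    linarith
  -- main strong induction
  intro n
  induction n using Nat.strong_induction_on with
  | _ n ih =>
    have step1 : coeff n μ ≤ coeff n ν + coeff n (A * μ) + coeff n b := by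
      have := hdomμ n
      rw [map_add, map_add] at this
      have he : (2 : PowerSeries ℝ) * a * μ = A * μ := by rw [hAdef]
      rw [he] at this
      linarith
    have step2 : coeff n (A * μ) ≤ coeff n (A * M) :=
      maj_conv_le A μ M n hA hA0 (fun j hj => ih j hj)
    have step3 : coeff n M = coeff n (2 * b * Z) + coeff n (A * M) := by
      conv_lhs => rw [hMeq]
      rw [map_add]
    have := hdomν n
    have := hkey n
    rw [hMdef] at step3 ⊢
    linarith [step2, step1]
end
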